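/- Let q ≥ 2 and let G be a homogeneous tree of order q+1 on a vertex set V: a connected acyclic simple graph in which every vertex has exactly q+1 neighbors. Fix a root o ∈ V and a natural number m, and let S = l_m = {v ∈ V : dist(o, v) = m} be the level of order m, where dist is the graph distance. Then for every φ : V → ℂ with support contained in S, ∑_{v∈V} |φ(v)|² ≤ (1 + q/(q+1)²)^{−1}·∑_{v∈V} |(𝓛φ)(v)|², where 𝓛 is the normalized Laplacian of G; that is, every level l_m is a Λ-set with Λ = (1 + q/(q+1)²)^{−1/2}. -/

import Mathlib

/-- The normalized Laplacian of a locally finite simple graph, acting on `f : V → ℂ`: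
`(𝓛 f) v = f v − ∑_{u ∼ v} f u / √(d u · d v)`. -/
noncomputable def nLap {V : Type*} (G : SimpleGraph V) [G.LocallyFinite] (f : V → ℂ) (v : V) : ℂ :=
  f v - ∑ u ∈ G.neighborFinset v, f u / (Real.sqrt ((G.degree u : ℝ) * (G.degree v : ℝ)) : ℂ)

section Aux
open SimpleGraph
variable {V : Type*} {G : SimpleGraph V}

/-- adjacent vertices have distances differing by one (in an acyclic connected graph) -/
lemma aux_adj_dist (hconn : G.Connected) (hacyc : G.IsAcyclic) {o u v : V}
    (huv : G.Adj u v) :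
    G.dist o v = G.dist o u + 1 ∨ G.dist o u = G.dist o v + 1 := by
  classical
  have h1 : G.dist o v ≤ G.dist o u + 1 := by
    calc G.dist o v ≤ G.dist o u + G.dist u v := hconn.dist_triangle
    _ ≤ G.dist o u + 1 := by
        have := dist_eq_one_iff_adj.mpr huv; omega
  have h2 : G.dist o u ≤ G.dist o v + 1 := by
    calc G.dist o u ≤ G.dist o v + G.dist v u := hconn.dist_triangle
    _ ≤ G.dist o v + 1 := by
        have := dist_eq_one_iff_adj.mpr huv.symm; omega
  have hne : G.dist o u ≠ G.dist o v := by
    intro hEq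
    obtain ⟨P, hPp, hPl⟩ := hconn.exists_path_of_dist o u
    have hvP : v ∉ P.support := by
      intro hv
      have hsplit := P.take_spec hv
      have hlen : (P.takeUntil v hv).length + (P.dropUntil v hv).length = P.length := by
        rw [← Walk.length_append, hsplit]
      have h3 : G.dist o v ≤ (P.takeUntil v hv).length := dist_le _
      have h4 : G.dist v u ≤ (P.dropUntil v hv).length := dist_le _
      have h5 : G.dist v u ≠ 0 := by
        rw [dist_ne_zero_iff_ne_and_reachable]
        exact ⟨huv.symm.ne, hconn v u⟩
      omega
    have hWp : (P.concat huv).IsPath := by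
      rw [Walk.isPath_def, Walk.support_concat]
      exact List.Nodup.append hPp.support_nodup (List.nodup_singleton v)
        (by simpa using hvP)
    obtain ⟨Q, hQp, hQl⟩ := hconn.exists_path_of_dist o v
    have hpq := hacyc.path_unique ⟨P.concat huv, hWp⟩ ⟨Q, hQp⟩
    have hl : (P.concat huv).length = Q.length := by
      rw [congrArg (fun p : G.Path o v => p.1.length) hpq]
    rw [Walk.length_concat] at hl
    omega
  omega

/-- uniqueness of parent -/
lemma aux_parent_unique (hconn : G.Connected) (hacyc : G.IsAcyclic) {o a b v : V} {n : ℕ}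
    (ha : G.dist o a = n) (hb : G.dist o b = n) (hv : G.dist o v = n + 1)
    (hav : G.Adj a v) (hbv : G.Adj b v) : a = b := by
  obtain ⟨P, hPp, hPl⟩ := hconn.exists_path_of_dist o a
  obtain ⟨Q, hQp, hQl⟩ := hconn.exists_path_of_dist o b
  have hWP : (P.concat hav).IsPath :=
    Walk.isPath_of_length_eq_dist _ (by rw [Walk.length_concat, hPl, hv, ha])
  have hWQ : (Q.concat hbv).IsPath :=
    Walk.isPath_of_length_eq_dist _ (by rw [Walk.length_concat, hQl, hv, hb])
  have hpq := hacyc.path_unique ⟨P.concat hav, hWP⟩ ⟨Q.concat hbv, hWQ⟩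
  have hwalk : P.concat hav = Q.concat hbv := congrArg Subtype.val hpq
  obtain ⟨hv', -⟩ := Walk.concat_inj hwalk
  exact hv'

/-- existence of parent -/
lemma aux_parent_exists (hconn : G.Connected) {o v : V} {n : ℕ}
    (hv : G.dist o v = n + 1) : ∃ u, G.Adj u v ∧ G.dist o u = n := by
  obtain ⟨P, hPp, hPl⟩ := hconn.exists_path_of_dist v o
  rw [dist_comm, hv] at hPl
  cases P with
  | nil => simp at hPl
  | @cons _ u _ h p =>
    refine ⟨u, h.symm, ?_⟩
    have h1 : G.dist o u ≤ n := by
      rw [dist_comm]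
      have := dist_le p
      simp only [Walk.length_cons] at hPl
      omega
    have h2 : G.dist o v ≤ G.dist o u + 1 := by
      calc G.dist o v ≤ G.dist o u + G.dist u v := hconn.dist_triangle
      _ ≤ G.dist o u + 1 := by have := dist_eq_one_iff_adj.mpr h.symm; omega
    omega

/-- spheres are finite -/
lemma aux_sphere_finite [G.LocallyFinite] (hconn : G.Connected) (o : V) (n : ℕ) :
    {v | G.dist o v = n}.Finite := by
  induction n with
  | zero =>
    apply Set.Finite.subset (Set.finite_singleton o)
    intro v hv
    simp only [Set.mem_setOf_eq] at hv
    simp [(hconn.dist_eq_zero_iff (u := o) (v := v)).mp hv |>.symm]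
  | succ n ih =>
    apply Set.Finite.subset (Set.Finite.biUnion ih (fun u _ => (G.neighborSet u).toFinite))
    intro v hv
    obtain ⟨u, hadj, hd⟩ := aux_parent_exists hconn hv
    exact Set.mem_biUnion hd hadj

/-- every vertex has at most one neighbor closer to the root, hence at least
`degree - 1` neighbors further away -/
lemma aux_children_card [G.LocallyFinite] (hconn : G.Connected) (hacyc : G.IsAcyclic)
    {o u : V} {n : ℕ} (hu : G.dist o u = n) :
    G.degree u ≤ ((G.neighborFinset u).filter (fun w => G.dist o w = n + 1)).card + 1 := by
  classical
  have hdeg : G.degree u = ((G.neighborFinset u).filter (fun w => G.dist o w = n + 1)).card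
      + ((G.neighborFinset u).filter (fun w => ¬ G.dist o w = n + 1)).card := by
    rw [Finset.card_filter_add_card_filter_not]
    exact (G.card_neighborFinset_eq_degree u).symm
  have hone : ((G.neighborFinset u).filter (fun w => ¬ G.dist o w = n + 1)).card ≤ 1 := by
    apply Finset.card_le_one.mpr
    intro a ha b hb
    simp only [Finset.mem_filter, mem_neighborFinset] at ha hb
    have hda : n = G.dist o a + 1 := by
      rcases aux_adj_dist hconn hacyc ha.1 (o := o) with h | h
      · exact absurd (hu ▸ h) ha.2
      · omega
    have hdb : n = G.dist o b + 1 := by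
      rcases aux_adj_dist hconn hacyc hb.1 (o := o) with h | h
      · exact absurd (hu ▸ h) hb.2
      · omega
    exact aux_parent_unique hconn hacyc rfl (by omega) (hu.trans hda) ha.1.symm hb.1.symm
  omega

end Aux

open SimpleGraph in
/-- On a homogeneous tree of order `q+1` (`q ≥ 2`), every level
`l_m = {v : dist(o,v) = m}` is a `Λ`-set with `Λ = (1 + q/(q+1)²)^{−1/2}`, i.e.
`∑ |φ|² ≤ (1 + q/(q+1)²)⁻¹ ∑ |𝓛φ|²` for every `φ` supported in `l_m`. -/
theorem tree_level_lambda_set {V : Type*} (G : SimpleGraph V) [G.LocallyFinite]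
    (q : ℕ) (hq : 2 ≤ q) (hconn : G.Connected) (hacyc : G.IsAcyclic)
    (hdeg : ∀ v : V, G.degree v = q + 1)
    (o : V) (m : ℕ) (φ : V → ℂ)
    (hsupp : ∀ v : V, v ∉ {v : V | G.dist o v = m} → φ v = 0) :
    (∑' v : V, ‖φ v‖ ^ 2) ≤
      (1 + (q : ℝ) / ((q : ℝ) + 1) ^ 2)⁻¹ * ∑' v : V, ‖nLap G φ v‖ ^ 2 := by
  classical
  have hq1 : (0:ℝ) < (q:ℝ) + 1 := by positivity
  have hφ0 : ∀ v, G.dist o v ≠ m → φ v = 0 := fun v h => hsupp v h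
  -- simplified Laplacian
  have hlap : ∀ v, nLap G φ v = φ v - (∑ u ∈ G.neighborFinset v, φ u) / (((q:ℝ)+1 : ℝ) : ℂ) := by
    intro v
    unfold nLap
    rw [Finset.sum_div]
    congr 1
    apply Finset.sum_congr rfl
    intro u _
    rw [hdeg u, hdeg v]
    push_cast
    rw [Real.sqrt_mul_self hq1.le]
    push_cast
    ring
  set S : Finset V := (aux_sphere_finite hconn o m).toFinset with hS
  set T : Finset V := (aux_sphere_finite hconn o (m+1)).toFinset with hT
  have hmemS : ∀ v, v ∈ S ↔ G.dist o v = m := by intro v; simp [hS]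
  have hmemT : ∀ v, v ∈ T ↔ G.dist o v = m+1 := by intro v; simp [hT]
  -- Laplacian on the sphere S
  have hlapS : ∀ v ∈ S, nLap G φ v = φ v := by
    intro v hv
    rw [hlap]
    have hzero : ∑ u ∈ G.neighborFinset v, φ u = 0 := by
      apply Finset.sum_eq_zero
      intro u hu
      apply hφ0
      have hadj : G.Adj v u := by rwa [mem_neighborFinset] at hu
      have hdv := (hmemS v).mp hv
      rcases aux_adj_dist hconn hacyc (o := o) hadj with h | h <;> omega
    rw [hzero]
    simp
  -- parent map
  have hparex : ∀ w, G.dist o w = m+1 → ∃ u, G.Adj u w ∧ G.dist o u = m :=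
    fun w h => aux_parent_exists hconn h
  set p : V → V := fun w =>
    if h : G.dist o w = m+1 then (hparex w h).choose else w with hp
  have hpadj : ∀ w, (h : G.dist o w = m+1) → G.Adj (p w) w ∧ G.dist o (p w) = m := by
    intro w h
    simp only [hp, dif_pos h]
    exact (hparex w h).choose_spec
  -- parent is unique
  have hpuniq : ∀ w, (h : G.dist o w = m+1) → ∀ u, G.Adj u w → G.dist o u = m → u = p w := by
    intro w h u hadj hdu
    exact aux_parent_unique hconn hacyc hdu (hpadj w h).2 h hadj (hpadj w h).1
  -- Laplacian on the sphere T
  have hlapT : ∀ w ∈ T, nLap G φ w = - (φ (p w) / (((q:ℝ)+1 : ℝ) : ℂ)) := by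
    intro w hw
    have hdw := (hmemT w).mp hw
    rw [hlap]
    have hφw : φ w = 0 := hφ0 w (by omega)
    have hfil : (G.neighborFinset w).filter (fun u => G.dist o u = m) = {p w} := by
      ext u
      simp only [Finset.mem_filter, mem_neighborFinset, Finset.mem_singleton]
      constructor
      · rintro ⟨hadj, hdu⟩
        exact hpuniq w hdw u hadj.symm hdu
      · rintro rfl
        exact ⟨(hpadj w hdw).1.symm, (hpadj w hdw).2⟩
    have hsum : ∑ u ∈ G.neighborFinset w, φ u = φ (p w) := by
      rw [← Finset.sum_filter_of_ne (p := fun u => G.dist o u = m)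
        (fun u _ h0 => by_contra fun hne => h0 (hφ0 u hne)), hfil, Finset.sum_singleton]
    rw [hsum, hφw]
    ring
  -- support of the Laplacian
  set F : Finset V := S ∪ S.biUnion (fun u => G.neighborFinset u) with hF
  have hF0 : ∀ v, v ∉ F → nLap G φ v = 0 := by
    intro v hv
    rw [hF, Finset.mem_union, not_or] at hv
    have hφv : φ v = 0 := by
      apply hφ0
      intro hdv
      exact hv.1 ((hmemS v).mpr hdv)
    have hzero : ∑ u ∈ G.neighborFinset v, φ u = 0 := by
      apply Finset.sum_eq_zero
      intro u hu
      by_contra h0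
      have hdu : G.dist o u = m := by_contra fun hne => h0 (hφ0 u hne)
      have hadj : G.Adj v u := by rwa [mem_neighborFinset] at hu
      refine hv.2 (Finset.mem_biUnion.mpr ⟨u, (hmemS u).mpr hdu, ?_⟩)
      rw [mem_neighborFinset]
      exact hadj.symm
    rw [hlap, hzero, hφv]
    simp
  -- tsums are finite sums
  have htsum1 : ∑' v : V, ‖φ v‖ ^ 2 = ∑ v ∈ S, ‖φ v‖ ^ 2 := by
    apply tsum_eq_sum
    intro v hv
    rw [hφ0 v (fun hdv => hv ((hmemS v).mpr hdv))]
    simp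
  have htsum2 : ∑' v : V, ‖nLap G φ v‖ ^ 2 = ∑ v ∈ F, ‖nLap G φ v‖ ^ 2 := by
    apply tsum_eq_sum
    intro v hv
    rw [hF0 v hv]
    simp
  -- S and T are disjoint subsets of F
  have hST : Disjoint S T := by
    rw [Finset.disjoint_left]
    intro a ha hb
    have := (hmemS a).mp ha
    have := (hmemT a).mp hb
    omega
  have hTF : T ⊆ S.biUnion (fun u => G.neighborFinset u) := by
    intro w hw
    have hdw := (hmemT w).mp hw
    refine Finset.mem_biUnion.mpr ⟨p w, (hmemS _).mpr (hpadj w hdw).2, ?_⟩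
    rw [mem_neighborFinset]
    exact (hpadj w hdw).1
  have hsub : S ∪ T ⊆ F := by
    rw [hF]
    exact Finset.union_subset Finset.subset_union_left
      (hTF.trans Finset.subset_union_right)
  -- lower bound for the big sum
  have hstep1 : ∑ v ∈ S, ‖φ v‖ ^ 2 + ∑ w ∈ T, ‖nLap G φ w‖ ^ 2 ≤ ∑ v ∈ F, ‖nLap G φ v‖ ^ 2 := by
    calc ∑ v ∈ S, ‖φ v‖ ^ 2 + ∑ w ∈ T, ‖nLap G φ w‖ ^ 2
        = ∑ v ∈ S, ‖nLap G φ v‖ ^ 2 + ∑ w ∈ T, ‖nLap G φ w‖ ^ 2 := by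
          congr 1
          exact Finset.sum_congr rfl (fun v hv => by rw [hlapS v hv])
      _ = ∑ v ∈ S ∪ T, ‖nLap G φ v‖ ^ 2 := (Finset.sum_union hST).symm
      _ ≤ ∑ v ∈ F, ‖nLap G φ v‖ ^ 2 := by
          apply Finset.sum_le_sum_of_subset_of_nonneg hsub
          intro v _ _
          positivity
  -- compute the T sum
  have hTsum : ∑ w ∈ T, ‖nLap G φ w‖ ^ 2 = (∑ w ∈ T, ‖φ (p w)‖ ^ 2) / ((q:ℝ)+1) ^ 2 := by
    rw [Finset.sum_div]
    apply Finset.sum_congr rfl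
    intro w hw
    rw [hlapT w hw, norm_neg, norm_div, div_pow]
    congr 1
    rw [Complex.norm_real, Real.norm_of_nonneg hq1.le]
  -- counting children
  have hcount : (q : ℝ) * ∑ v ∈ S, ‖φ v‖ ^ 2 ≤ ∑ w ∈ T, ‖φ (p w)‖ ^ 2 := by
    have hmaps : ∀ w ∈ T, p w ∈ S := fun w hw => (hmemS _).mpr (hpadj w ((hmemT w).mp hw)).2
    rw [← Finset.sum_fiberwise_of_maps_to hmaps (fun w => ‖φ (p w)‖ ^ 2), Finset.mul_sum]
    apply Finset.sum_le_sum
    intro u hu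
    have hinner : ∑ w ∈ T.filter (fun w => p w = u), ‖φ (p w)‖ ^ 2
        = (T.filter (fun w => p w = u)).card * ‖φ u‖ ^ 2 := by
      rw [Finset.sum_congr rfl (fun w hw => by rw [(Finset.mem_filter.mp hw).2]),
        Finset.sum_const, nsmul_eq_mul]
    rw [hinner]
    have hcard : q ≤ (T.filter (fun w => p w = u)).card := by
      have hdu := (hmemS u).mp hu
      have hchild : (G.neighborFinset u).filter (fun w => G.dist o w = m + 1)
          ⊆ T.filter (fun w => p w = u) := by
        intro w hw
        rw [Finset.mem_filter] at hw ⊢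
        obtain ⟨hadj, hdw⟩ := hw
        have hadj' : G.Adj u w := by rwa [mem_neighborFinset] at hadj
        exact ⟨(hmemT w).mpr hdw, ((hpuniq w hdw u hadj' hdu)).symm⟩
      have h1 := aux_children_card hconn hacyc hdu
      have h2 := Finset.card_le_card hchild
      rw [hdeg u] at h1
      omega
    have : (q:ℝ) ≤ ((T.filter (fun w => p w = u)).card : ℝ) := by exact_mod_cast hcard
    apply mul_le_mul_of_nonneg_right this
    positivity
  -- put everything together
  set A := ∑ v ∈ S, ‖φ v‖ ^ 2 with hA
  have hA0 : 0 ≤ A := Finset.sum_nonneg (fun v _ => by positivity)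
  set B := ∑ v ∈ F, ‖nLap G φ v‖ ^ 2 with hB
  have hkey : (1 + (q : ℝ) / ((q : ℝ) + 1) ^ 2) * A ≤ B := by
    have h3 : (q:ℝ) * A / ((q:ℝ)+1)^2 ≤ ∑ w ∈ T, ‖nLap G φ w‖ ^ 2 := by
      rw [hTsum]
      gcongr
    have hq2 : (0:ℝ) < ((q:ℝ)+1)^2 := by positivity
    rw [add_mul, one_mul, div_mul_eq_mul_div]
    calc A + (q:ℝ) * A / ((q:ℝ)+1)^2 ≤ A + ∑ w ∈ T, ‖nLap G φ w‖ ^ 2 := by linarith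
      _ ≤ B := hstep1
  rw [htsum1, htsum2]
  have hc : (0:ℝ) < 1 + (q : ℝ) / ((q : ℝ) + 1) ^ 2 := by positivity
  calc A = (1 + (q:ℝ)/((q:ℝ)+1)^2)⁻¹ * ((1 + (q:ℝ)/((q:ℝ)+1)^2) * A) := by
        field_simp
    _ ≤ (1 + (q:ℝ)/((q:ℝ)+1)^2)⁻¹ * B :=
        mul_le_mul_of_nonneg_left hkey (by positivity)
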